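/- Suppose the grading (g_j)_{j∈ℤ} of M_N(ℂ) is good for the nilpotent matrix e ∈ g₂. Then for every j ≤ −1 the linear map g_j → g_{j+2}, x ↦ ex + xe, is injective, and for every j ≥ −1 it is surjective. -/

import Mathlib

/-- The `ad h`-eigenspace grading of `M_N(ℂ)`:
`g_j = {x ∈ M_N(ℂ) : hx − xh = j·x}`. -/
noncomputable def adGrading {N : ℕ} (h : Matrix (Fin N) (Fin N) ℂ) (j : ℤ) :
    Submodule ℂ (Matrix (Fin N) (Fin N) ℂ) where
  carrier := {x | h * x - x * h = (j : ℂ) • x}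
  zero_mem' := by simp
  add_mem' := by
    intro a b ha hb
    simp only [Set.mem_setOf_eq] at ha hb ⊢
    rw [smul_add, ← ha, ← hb]
    noncomm_ring
  smul_mem' := by
    intro c a ha
    simp only [Set.mem_setOf_eq] at ha ⊢
    rw [mul_smul_comm, smul_mul_assoc, ← smul_sub, ha]
    exact smul_comm _ _ _

namespace Stmt7Aux

variable {N : ℕ}

open Module

lemma mem_adGrading {h : Matrix (Fin N) (Fin N) ℂ} {j : ℤ} {x : Matrix (Fin N) (Fin N) ℂ} :
    x ∈ adGrading h j ↔ h * x - x * h = (j : ℂ) • x := Iff.rfl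

lemma mul_mem_adGrading {h x y : Matrix (Fin N) (Fin N) ℂ} {i k : ℤ}
    (hx : x ∈ adGrading h i) (hy : y ∈ adGrading h k) : x * y ∈ adGrading h (i + k) := by
  rw [mem_adGrading] at hx hy ⊢
  have key : h * (x * y) - (x * y) * h = (h * x - x * h) * y + x * (h * y - y * h) := by
    noncomm_ring
  rw [key, hx, hy, smul_mul_assoc, mul_smul_comm, ← add_smul, Int.cast_add]

lemma trace_eq_zero_of_mem_adGrading {h x : Matrix (Fin N) (Fin N) ℂ} {l : ℤ} (hl : l ≠ 0)
    (hx : x ∈ adGrading h l) : x.trace = 0 := by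
  rw [mem_adGrading] at hx
  have := congrArg Matrix.trace hx
  rw [Matrix.trace_sub, Matrix.trace_mul_comm, sub_self, Matrix.trace_smul] at this
  have hl' : (l : ℂ) ≠ 0 := Int.cast_ne_zero.mpr hl
  simpa [smul_eq_mul, eq_comm, hl'] using this

lemma eq_zero_of_forall_trace_mul {z : Matrix (Fin N) (Fin N) ℂ}
    (hz : ∀ y : Matrix (Fin N) (Fin N) ℂ, (z * y).trace = 0) : z = 0 := by
  ext a b
  have := hz (Matrix.single b a 1)
  simp only [Matrix.trace, Matrix.diag, Matrix.mul_apply, Matrix.single,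
    Matrix.of_apply, mul_ite, mul_one, mul_zero, ite_and] at this
  rw [Finset.sum_comm] at this
  simpa using this

lemma exists_decomp {h : Matrix (Fin N) (Fin N) ℂ}
    (hinternal : DirectSum.IsInternal (adGrading h)) (z : Matrix (Fin N) (Fin N) ℂ) :
    ∃ (s : Finset ℤ) (c : ℤ → Matrix (Fin N) (Fin N) ℂ),
      (∀ k, c k ∈ adGrading h k) ∧ (∀ k ∉ s, c k = 0) ∧ z = ∑ k ∈ s, c k := by
  classical
  obtain ⟨w, hw⟩ := hinternal.surjective z
  refine ⟨w.support, fun k => (w k : Matrix (Fin N) (Fin N) ℂ), fun k => (w k).2, ?_, ?_⟩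
  · intro k hk
    simp [DFinsupp.notMem_support_iff.mp hk]
  · calc z = DirectSum.coeAddMonoidHom (adGrading h) w := hw.symm
      _ = DirectSum.coeAddMonoidHom (adGrading h)
            (∑ k ∈ w.support, DirectSum.of (fun i => ↥(adGrading h i)) k (w k)) := by
          rw [DirectSum.sum_support_of]
      _ = ∑ k ∈ w.support, ((w k : Matrix (Fin N) (Fin N) ℂ)) := by
          rw [map_sum]
          simp [DirectSum.coeAddMonoidHom_of]

lemma eq_zero_of_neg_mem {h x : Matrix (Fin N) (Fin N) ℂ} {m : ℤ}
    (hinternal : DirectSum.IsInternal (adGrading h)) (hm : m < 0)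
    (hx : x ∈ adGrading h m) (hx' : x ∈ ⨆ j ≥ (0 : ℤ), adGrading h j) : x = 0 := by
  have hind := hinternal.submodule_iSupIndep
  have hdis := hind m
  have hle : (⨆ j ≥ (0 : ℤ), adGrading h j) ≤ ⨆ j ≠ m, adGrading h j := by
    refine iSup₂_le fun j hj => ?_
    exact le_iSup₂ (f := fun j (_ : j ≠ m) => adGrading h j) j (by omega)
  exact Submodule.disjoint_def.mp (hdis.mono_right hle) x hx hx'

/-- Linear-map extensionality on a spanning family of submodules. -/
lemma ext_of_iSup {W : ℂ → Submodule ℂ (Fin N → ℂ)} (hW : ⨆ μ, W μ = ⊤)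
    {F₁ F₂ : Module.End ℂ (Fin N → ℂ)} (hF : ∀ μ, ∀ v ∈ W μ, F₁ v = F₂ v) : F₁ = F₂ := by
  have hker : (⨆ μ, W μ) ≤ LinearMap.ker (F₁ - F₂) := by
    refine iSup_le fun μ u hu => ?_
    simp [LinearMap.mem_ker, sub_eq_zero, hF μ u hu]
  refine LinearMap.ext fun v => ?_
  have hv : v ∈ (⊤ : Submodule ℂ (Fin N → ℂ)) := Submodule.mem_top
  rw [← hW] at hv
  have := hker hv
  simpa [LinearMap.mem_ker, sub_eq_zero] using this

/-- A scalar-on-each-`maxGenEigenspace` endomorphism. -/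
noncomputable def gEnd (H : Module.End ℂ (Fin N → ℂ)) (f : ℂ → ℂ)
    (hint : DirectSum.IsInternal (fun μ : ℂ => H.maxGenEigenspace μ)) :
    Module.End ℂ (Fin N → ℂ) :=
  (DirectSum.toModule ℂ ℂ _ (fun μ => f μ • (H.maxGenEigenspace μ).subtype)) ∘ₗ
    (LinearEquiv.ofBijective (DirectSum.coeLinearMap _) hint).symm.toLinearMap

lemma gEnd_apply (H : Module.End ℂ (Fin N → ℂ)) (f : ℂ → ℂ)
    (hint : DirectSum.IsInternal (fun μ : ℂ => H.maxGenEigenspace μ))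
    {μ : ℂ} {v : Fin N → ℂ} (hv : v ∈ H.maxGenEigenspace μ) :
    gEnd H f hint v = f μ • v := by
  have h1 : (LinearEquiv.ofBijective (DirectSum.coeLinearMap
      (fun μ : ℂ => H.maxGenEigenspace μ)) hint)
      (DirectSum.lof ℂ ℂ (fun μ : ℂ => H.maxGenEigenspace μ) μ ⟨v, hv⟩) = v := by
    simp [LinearEquiv.ofBijective_apply, DirectSum.lof_eq_of, DirectSum.coeLinearMap_of]
    exact DirectSum.coeLinearMap_of _ μ ⟨v, hv⟩
  rw [gEnd, LinearMap.comp_apply]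
  rw [← h1, LinearEquiv.coe_coe, LinearEquiv.symm_apply_apply, DirectSum.toModule_lof]
  simp only [← DirectSum.lof_eq_of ℂ, h1]
  simp

lemma pow_shift (H E : Module.End ℂ (Fin N → ℂ))
    (hcomm : H * E = E * H + (2 : ℂ) • E) (μ : ℂ) : ∀ k : ℕ,
    (H - (μ + 2) • 1) ^ k * E = E * (H - μ • 1) ^ k := by
  have base : (H - (μ + 2) • 1) * E = E * (H - μ • 1) := by
    rw [sub_mul, mul_sub, hcomm, smul_mul_assoc, one_mul, mul_smul_comm, mul_one]
    rw [show ((μ : ℂ) + 2) = 2 + μ by ring, add_smul]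
    abel
  intro k
  induction k with
  | zero => simp
  | succ k ih =>
      rw [pow_succ, pow_succ, mul_assoc, base, ← mul_assoc, ih, mul_assoc]

lemma mapsE (H E : Module.End ℂ (Fin N → ℂ))
    (hcomm : H * E = E * H + (2 : ℂ) • E) {μ : ℂ} {v : Fin N → ℂ}
    (hv : v ∈ H.maxGenEigenspace μ) : E v ∈ H.maxGenEigenspace (μ + 2) := by
  rw [Module.End.mem_maxGenEigenspace] at hv ⊢
  obtain ⟨k, hk⟩ := hv
  refine ⟨k, ?_⟩
  calc ((H - (μ + 2) • 1) ^ k) (E v) = ((H - (μ + 2) • 1) ^ k * E) v := rfl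
    _ = (E * (H - μ • 1) ^ k) v := by rw [pow_shift H E hcomm]
    _ = E (((H - μ • 1) ^ k) v) := rfl
    _ = 0 := by rw [hk, map_zero]

lemma exists_g (h e : Matrix (Fin N) (Fin N) ℂ) (he2 : h * e - e * h = (2 : ℂ) • e) :
    ∃ g g' : Matrix (Fin N) (Fin N) ℂ,
      g * g' = 1 ∧ g' * g = 1 ∧ g * e = -(e * g) ∧ g * h = h * g := by
  set Φ : Matrix (Fin N) (Fin N) ℂ ≃ₐ[ℂ] Module.End ℂ (Fin N → ℂ) :=
    Matrix.toLinAlgEquiv'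
  set H : Module.End ℂ (Fin N → ℂ) := Φ h with hH
  set E : Module.End ℂ (Fin N → ℂ) := Φ e with hE
  have hcomm : H * E = E * H + (2 : ℂ) • E := by
    have := congrArg Φ he2
    rw [map_sub, map_mul, map_mul, map_smul] at this
    rw [← hH, ← hE] at this
    linear_combination (norm := abel) this
  have hint : DirectSum.IsInternal (fun μ : ℂ => H.maxGenEigenspace μ) :=
    DirectSum.isInternal_submodule_of_iSupIndep_of_iSup_eq_top
      (Module.End.independent_maxGenEigenspace H)
      (Module.End.iSup_maxGenEigenspace_eq_top H)
  have hW := Module.End.iSup_maxGenEigenspace_eq_top H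
  set f : ℂ → ℂ := fun μ => Complex.exp ((Real.pi : ℂ) * Complex.I * μ / 2) with hf
  have hf2 : ∀ μ, f (μ + 2) = -f μ := by
    intro μ
    have harg : (Real.pi : ℂ) * Complex.I * (μ + 2) / 2
        = (Real.pi : ℂ) * Complex.I * μ / 2 + (Real.pi : ℂ) * Complex.I := by ring
    rw [hf]
    simp only []
    rw [harg, Complex.exp_add, Complex.exp_pi_mul_I]
    ring
  have hf0 : ∀ μ, f μ ≠ 0 := fun μ => Complex.exp_ne_zero _
  set G : Module.End ℂ (Fin N → ℂ) := gEnd H f hint with hG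
  set G' : Module.End ℂ (Fin N → ℂ) := gEnd H (fun μ => (f μ)⁻¹) hint with hG'
  have hGG' : G * G' = 1 := by
    refine ext_of_iSup hW fun μ v hv => ?_
    have h1 : (f μ)⁻¹ • v ∈ H.maxGenEigenspace μ := Submodule.smul_mem _ _ hv
    rw [Module.End.mul_apply, hG', gEnd_apply _ _ _ hv, hG, gEnd_apply _ _ _ h1,
      smul_smul, mul_inv_cancel₀ (hf0 μ), one_smul, Module.End.one_apply]
  have hG'G : G' * G = 1 := by
    refine ext_of_iSup hW fun μ v hv => ?_
    have h1 : f μ • v ∈ H.maxGenEigenspace μ := Submodule.smul_mem _ _ hv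
    rw [Module.End.mul_apply, hG, gEnd_apply _ _ _ hv, hG', gEnd_apply _ _ _ h1,
      smul_smul, inv_mul_cancel₀ (hf0 μ), one_smul, Module.End.one_apply]
  have hGE : G * E = -(E * G) := by
    refine ext_of_iSup hW fun μ v hv => ?_
    have hEv : E v ∈ H.maxGenEigenspace (μ + 2) := mapsE H E hcomm hv
    rw [Module.End.mul_apply, hG, gEnd_apply _ _ _ hEv, LinearMap.neg_apply,
      Module.End.mul_apply, gEnd_apply _ _ _ hv, map_smul, hf2, neg_smul]
  have hGH : G * H = H * G := by
    refine ext_of_iSup hW fun μ v hv => ?_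
    have hHv : H v ∈ H.maxGenEigenspace μ :=
      Module.End.mapsTo_maxGenEigenspace_of_comm (Commute.refl H) μ hv
    rw [Module.End.mul_apply, Module.End.mul_apply, hG, gEnd_apply _ _ _ hHv,
      gEnd_apply _ _ _ hv, map_smul]
  refine ⟨Φ.symm G, Φ.symm G', ?_, ?_, ?_, ?_⟩
  · apply Φ.injective
    rw [map_mul, map_one, Φ.apply_symm_apply, Φ.apply_symm_apply, hGG']
  · apply Φ.injective
    rw [map_mul, map_one, Φ.apply_symm_apply, Φ.apply_symm_apply, hG'G]
  · apply Φ.injective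
    rw [map_mul, map_neg, map_mul, Φ.apply_symm_apply, ← hE, hGE]
  · apply Φ.injective
    rw [map_mul, map_mul, Φ.apply_symm_apply, ← hH, hGH]

/-- Injectivity of `x ↦ ex + xe` on `g_j` for `j ≤ -1`. -/
lemma inj_aux (h e : Matrix (Fin N) (Fin N) ℂ)
    (hinternal : DirectSum.IsInternal (adGrading h))
    (he : e ∈ adGrading h 2)
    (hgood : ∀ x : Matrix (Fin N) (Fin N) ℂ, x * e = e * x →
      x ∈ ⨆ j ≥ (0 : ℤ), adGrading h j) :
    ∀ j : ℤ, j ≤ -1 → ∀ x ∈ adGrading h j, e * x + x * e = 0 → x = 0 := by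
  have he2 : h * e - e * h = (2 : ℂ) • e := by
    have := mem_adGrading.mp he
    simpa using this
  obtain ⟨g, g', hgg', hg'g, hge, hgh⟩ := exists_g h e he2
  have hg0 : g ∈ adGrading h 0 := by
    rw [mem_adGrading, hgh]
    simp
  intro j hj x hx hA
  have hxe : x * e = -(e * x) := by
    have := eq_neg_of_add_eq_zero_right hA
    exact this
  have hy : (x * g) * e = e * (x * g) := by
    have step : x * g * e = e * x * g := by
      rw [mul_assoc, hge, mul_neg, ← mul_assoc, hxe, neg_mul, neg_neg]
    rw [step, mul_assoc]
  have hmem : x * g ∈ adGrading h j := by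
    have := mul_mem_adGrading hx hg0
    simpa using this
  have hz : x * g = 0 := eq_zero_of_neg_mem hinternal (by omega) hmem (hgood _ hy)
  calc x = x * (g * g') := by rw [hgg', mul_one]
    _ = (x * g) * g' := (mul_assoc _ _ _).symm
    _ = 0 := by rw [hz, zero_mul]

lemma exists_pairing {h : Matrix (Fin N) (Fin N) ℂ}
    (hinternal : DirectSum.IsInternal (adGrading h)) (z : Matrix (Fin N) (Fin N) ℂ) (d : ℤ) :
    ∃ z' ∈ adGrading h (-d), ∀ w ∈ adGrading h d, (z' * w).trace = (z * w).trace := by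
  obtain ⟨s, c, hcmem, hcout, hzeq⟩ := exists_decomp hinternal z
  refine ⟨c (-d), hcmem _, fun w hw => ?_⟩
  rw [hzeq, Finset.sum_mul, Matrix.trace_sum]
  by_cases hds : (-d) ∈ s
  · rw [Finset.sum_eq_single_of_mem (-d) hds]
    intro k _ hne
    exact trace_eq_zero_of_mem_adGrading (by omega) (mul_mem_adGrading (hcmem k) hw)
  · rw [Finset.sum_eq_zero, hcout _ hds, zero_mul, Matrix.trace_zero]
    intro k hk
    have hkd : k + d ≠ 0 := by
      intro hc
      exact hds (by rwa [show -d = k by omega])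
    exact trace_eq_zero_of_mem_adGrading hkd (mul_mem_adGrading (hcmem k) hw)

lemma eq_zero_of_trace_pair {h : Matrix (Fin N) (Fin N) ℂ}
    (hinternal : DirectSum.IsInternal (adGrading h)) {n : ℤ} {u : Matrix (Fin N) (Fin N) ℂ}
    (hu : u ∈ adGrading h n)
    (hperp : ∀ x ∈ adGrading h (-n), (u * x).trace = 0) : u = 0 := by
  apply eq_zero_of_forall_trace_mul
  intro y
  obtain ⟨s, c, hcmem, hcout, hyeq⟩ := exists_decomp hinternal y
  rw [hyeq, Finset.mul_sum, Matrix.trace_sum]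
  refine Finset.sum_eq_zero fun k hk => ?_
  by_cases hkn : k = -n
  · subst hkn
    exact hperp _ (hcmem _)
  · exact trace_eq_zero_of_mem_adGrading (by omega) (mul_mem_adGrading hu (hcmem k))

/-- The trace pairing `z ↦ tr (z ⬝ ·)` as a map to the dual. -/
noncomputable def traceDual :
    Matrix (Fin N) (Fin N) ℂ →ₗ[ℂ] Module.Dual ℂ (Matrix (Fin N) (Fin N) ℂ) where
  toFun z := (Matrix.traceLinearMap (Fin N) ℂ ℂ).comp (LinearMap.mulLeft ℂ z)
  map_add' z1 z2 := by
    ext y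
    simp [add_mul]
  map_smul' c z := by
    ext y
    simp [Matrix.smul_mul]

@[simp] lemma traceDual_apply (z y : Matrix (Fin N) (Fin N) ℂ) :
    traceDual z y = (z * y).trace := rfl

end Stmt7Aux

open Stmt7Aux in
/-- Suppose the grading `(g_j)` of `M_N(ℂ)` is good for the nilpotent
matrix `e ∈ g₂`.  Then for every `j ≤ −1` the map `g_j → g_{j+2}`, `x ↦ ex + xe`,
is injective, and for every `j ≥ −1` it is surjective. -/
theorem stmt7 {N : ℕ} (h e : Matrix (Fin N) (Fin N) ℂ)
    (hinternal : DirectSum.IsInternal (adGrading h))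
    (hnil : IsNilpotent e)
    (he : e ∈ adGrading h 2)
    (hgood : ∀ x : Matrix (Fin N) (Fin N) ℂ, x * e = e * x →
      x ∈ ⨆ j ≥ (0 : ℤ), adGrading h j) :
    (∀ j : ℤ, j ≤ -1 → ∀ x ∈ adGrading h j, e * x + x * e = 0 → x = 0) ∧
    (∀ j : ℤ, -1 ≤ j → ∀ y ∈ adGrading h (j + 2), ∃ x ∈ adGrading h j,
      e * x + x * e = y) := by
  refine ⟨inj_aux h e hinternal he hgood, ?_⟩
  intro j hj y hy
  by_contra hcon
  push_neg at hcon
  set T : Matrix (Fin N) (Fin N) ℂ →ₗ[ℂ] Matrix (Fin N) (Fin N) ℂ :=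
    LinearMap.mulLeft ℂ e + LinearMap.mulRight ℂ e with hT
  have hTapp : ∀ x, T x = e * x + x * e := by
    intro x
    simp [hT]
  set W' : Submodule ℂ (Matrix (Fin N) (Fin N) ℂ) := (adGrading h j).map T with hW'
  have hyW : y ∉ W' := by
    rintro ⟨x, hxm, hxeq⟩
    exact hcon x hxm (by rw [← hTapp]; exact hxeq)
  have hqy : W'.mkQ y ≠ 0 := by
    intro h0
    apply hyW
    rwa [Submodule.mkQ_apply, Submodule.Quotient.mk_eq_zero] at h0
  obtain ⟨ψ, hψ⟩ : ∃ ψ : Module.Dual ℂ (Matrix (Fin N) (Fin N) ℂ ⧸ W'),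
      ψ (W'.mkQ y) ≠ 0 := by
    by_contra hall
    push_neg at hall
    exact hqy ((Module.forall_dual_apply_eq_zero_iff ℂ _).mp hall)
  set φ : Module.Dual ℂ (Matrix (Fin N) (Fin N) ℂ) := ψ.comp W'.mkQ with hφ
  have hφW : ∀ w ∈ W', φ w = 0 := by
    intro w hw
    have : W'.mkQ w = 0 := by
      rw [Submodule.mkQ_apply, Submodule.Quotient.mk_eq_zero]
      exact hw
    simp [hφ, this]
  have hφy : φ y ≠ 0 := hψ
  have hinj : Function.Injective (traceDual (N := N)) := by
    rw [← LinearMap.ker_eq_bot, Submodule.eq_bot_iff]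
    intro z hz
    apply eq_zero_of_forall_trace_mul
    intro y'
    have := LinearMap.congr_fun (LinearMap.mem_ker.mp hz) y'
    simpa using this
  have hsurj : Function.Surjective (traceDual (N := N)) :=
    (LinearMap.injective_iff_surjective_of_finrank_eq_finrank
      (Subspace.dual_finrank_eq).symm).mp hinj
  obtain ⟨z, hz⟩ := hsurj φ
  obtain ⟨z', hz'm, hz'⟩ := exists_pairing hinternal z (j + 2)
  have humem : e * z' + z' * e ∈ adGrading h (-j) := by
    have h1 := mul_mem_adGrading he hz'm
    have h2 := mul_mem_adGrading hz'm he
    rw [show (2 + -(j + 2) : ℤ) = -j by ring] at h1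
    rw [show (-(j + 2) + 2 : ℤ) = -j by ring] at h2
    exact Submodule.add_mem _ h1 h2
  have hu : e * z' + z' * e = 0 := by
    apply eq_zero_of_trace_pair hinternal humem
    intro x hx'
    rw [neg_neg] at hx'
    have hTx : e * x + x * e ∈ adGrading h (j + 2) := by
      have h1 := mul_mem_adGrading he hx'
      have h2 := mul_mem_adGrading hx' he
      rw [show (2 + j : ℤ) = j + 2 by ring] at h1
      exact Submodule.add_mem _ h1 h2
    have hTxW : e * x + x * e ∈ W' := ⟨x, hx', (hTapp x)⟩
    have t1 : (e * z' * x).trace = (z' * (x * e)).trace := by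
      rw [mul_assoc, Matrix.trace_mul_comm, mul_assoc]
    have t2 : (z' * e * x).trace = (z' * (e * x)).trace := by rw [mul_assoc]
    calc ((e * z' + z' * e) * x).trace
        = (z' * (e * x + x * e)).trace := by
          rw [add_mul, Matrix.trace_add, t1, t2, mul_add, Matrix.trace_add, add_comm]
      _ = (z * (e * x + x * e)).trace := hz' _ hTx
      _ = φ (e * x + x * e) := by rw [← hz, traceDual_apply]
      _ = 0 := hφW _ hTxW
  have hz'0 : z' = 0 :=
    inj_aux h e hinternal he hgood (-(j + 2)) (by omega) z' hz'm hu
  apply hφy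
  have hval : φ y = (z * y).trace := by rw [← hz, traceDual_apply]
  rw [hval, ← hz' y hy, hz'0, zero_mul, Matrix.trace_zero]
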